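/- Suppose fᵢ'(z) = z^{nᵢ}·tᵢ(z) with tᵢ : 𝔻 → ℂ holomorphic, tᵢ(0) ≠ 0, and n₁ < n₂, n₃, n₄. Then there exists η > 0 such that for every z with 0 < |z| < η, both ω₊(∂F/∂x(z), ∂F/∂y(z)) > 0 and ω₋(∂F/∂x(z), ∂F/∂y(z)) > 0; i.e. near the branch point the tangent planes of F are symplectic for both symplectic structures. -/

import Mathlib

open Complex ComplexConjugate Metric Filter Topology

/-- The symplectic form `ω₊(u,v) = (u₁v₂ − u₂v₁) + (u₃v₄ − u₄v₃)` on `ℝ⁴ ≅ ℂ²`. -/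
noncomputable def omegaPlus (u v : ℂ × ℂ) : ℝ :=
  (u.1.re * v.1.im - u.1.im * v.1.re) + (u.2.re * v.2.im - u.2.im * v.2.re)

/-- The symplectic form `ω₋(u,v) = (u₁v₂ − u₂v₁) − (u₃v₄ − u₄v₃)` on `ℝ⁴ ≅ ℂ²`. -/
noncomputable def omegaMinus (u v : ℂ × ℂ) : ℝ :=
  (u.1.re * v.1.im - u.1.im * v.1.re) - (u.2.re * v.2.im - u.2.im * v.2.re)

lemma key_fderiv {f₁ f₂ f₃ f₄ : ℂ → ℂ} {z a b c d : ℂ}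
    (h₁ : HasDerivAt f₁ a z) (h₂ : HasDerivAt f₂ b z)
    (h₃ : HasDerivAt f₃ c z) (h₄ : HasDerivAt f₄ d z)
    (F : ℂ → ℂ × ℂ) (hF : ∀ w, F w = (f₁ w + conj (f₂ w), f₃ w + conj (f₄ w))) :
    ∀ v : ℂ, fderiv ℝ F z v = (a * v + conj (b * v), c * v + conj (d * v)) := by
  have e₁ := (h₁.hasFDerivAt.restrictScalars ℝ)
  have e₂ := Complex.conjCLE.toContinuousLinearMap.hasFDerivAt.comp z
    (h₂.hasFDerivAt.restrictScalars ℝ)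
  have e₃ := (h₃.hasFDerivAt.restrictScalars ℝ)
  have e₄ := Complex.conjCLE.toContinuousLinearMap.hasFDerivAt.comp z
    (h₄.hasFDerivAt.restrictScalars ℝ)
  have hFe : F = fun w => (f₁ w + conj (f₂ w), f₃ w + conj (f₄ w)) := funext hF
  have hFd := ((e₁.add e₂).prodMk (e₃.add e₄))
  simp only [Function.comp_def, ContinuousLinearEquiv.coe_coe, Complex.conjCLE_apply,
    Pi.add_apply, ← hFe] at hFd
  intro v
  rw [hFd.fderiv]
  simp [mul_comm]

lemma omegaPlus_eval (a b c d : ℂ) :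
    omegaPlus (a + conj b, c + conj d)
      (a * Complex.I + conj (b * Complex.I), c * Complex.I + conj (d * Complex.I)) =
    (Complex.normSq a - Complex.normSq b) + (Complex.normSq c - Complex.normSq d) := by
  simp only [omegaPlus, Complex.normSq_apply, Complex.add_re, Complex.add_im,
    Complex.conj_re, Complex.conj_im, Complex.mul_re, Complex.mul_im,
    Complex.I_re, Complex.I_im]
  ring

lemma omegaMinus_eval (a b c d : ℂ) :
    omegaMinus (a + conj b, c + conj d)
      (a * Complex.I + conj (b * Complex.I), c * Complex.I + conj (d * Complex.I)) =
    (Complex.normSq a - Complex.normSq b) - (Complex.normSq c - Complex.normSq d) := by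
  simp only [omegaMinus, Complex.normSq_apply, Complex.add_re, Complex.add_im,
    Complex.conj_re, Complex.conj_im, Complex.mul_re, Complex.mul_im,
    Complex.I_re, Complex.I_im]
  ring

/-- If `fᵢ'(z) = z^{nᵢ} tᵢ(z)` with `tᵢ(0) ≠ 0` and `n₁ < n₂, n₃, n₄`,
then near the branch point the tangent planes of `F` are symplectic for both `ω₊`
and `ω₋`: there is `η > 0` with `ω₊(∂F/∂x, ∂F/∂y) > 0` and `ω₋(∂F/∂x, ∂F/∂y) > 0`
for `0 < |z| < η`. -/
theorem tangent_planes_symplectic_near_branch_point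
    (n₁ n₂ n₃ n₄ : ℕ)
    (h12 : n₁ < n₂) (h13 : n₁ < n₃) (h14 : n₁ < n₄)
    (t₁ t₂ t₃ t₄ f₁ f₂ f₃ f₄ : ℂ → ℂ)
    (ht₁ : DifferentiableOn ℂ t₁ (ball (0:ℂ) 1))
    (ht₂ : DifferentiableOn ℂ t₂ (ball (0:ℂ) 1))
    (ht₃ : DifferentiableOn ℂ t₃ (ball (0:ℂ) 1))
    (ht₄ : DifferentiableOn ℂ t₄ (ball (0:ℂ) 1))
    (ht₁0 : t₁ 0 ≠ 0) (ht₂0 : t₂ 0 ≠ 0) (ht₃0 : t₃ 0 ≠ 0) (ht₄0 : t₄ 0 ≠ 0)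
    (hf₁ : ∀ z ∈ ball (0:ℂ) 1, HasDerivAt f₁ (z ^ n₁ * t₁ z) z)
    (hf₂ : ∀ z ∈ ball (0:ℂ) 1, HasDerivAt f₂ (z ^ n₂ * t₂ z) z)
    (hf₃ : ∀ z ∈ ball (0:ℂ) 1, HasDerivAt f₃ (z ^ n₃ * t₃ z) z)
    (hf₄ : ∀ z ∈ ball (0:ℂ) 1, HasDerivAt f₄ (z ^ n₄ * t₄ z) z)
    (F : ℂ → ℂ × ℂ)
    (hF : ∀ z, F z = (f₁ z + conj (f₂ z), f₃ z + conj (f₄ z))) :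
    ∃ η > (0:ℝ), ∀ z : ℂ, 0 < ‖z‖ → ‖z‖ < η →
      0 < omegaPlus (fderiv ℝ F z 1) (fderiv ℝ F z Complex.I) ∧
      0 < omegaMinus (fderiv ℝ F z 1) (fderiv ℝ F z Complex.I) := by
  set m : ℝ := ‖t₁ 0‖ with hm_def
  have hm : 0 < m := norm_pos_iff.mpr ht₁0
  set M : ℝ := max (max (‖t₂ 0‖ + 1) (‖t₃ 0‖ + 1)) (‖t₄ 0‖ + 1) with hM_def
  have hM1 : (1:ℝ) ≤ M := by
    have : (1:ℝ) ≤ ‖t₂ 0‖ + 1 := le_add_of_nonneg_left (norm_nonneg _)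
    exact this.trans ((le_max_left _ _).trans (le_max_left _ _))
  have hM : 0 < M := lt_of_lt_of_le one_pos hM1
  have h0mem : (0:ℂ) ∈ ball (0:ℂ) 1 := mem_ball_self one_pos
  have hnhds : ball (0:ℂ) 1 ∈ 𝓝 (0:ℂ) := isOpen_ball.mem_nhds h0mem
  have c₁ : ContinuousAt t₁ 0 := (ht₁.continuousOn.continuousAt hnhds)
  have c₂ : ContinuousAt t₂ 0 := (ht₂.continuousOn.continuousAt hnhds)
  have c₃ : ContinuousAt t₃ 0 := (ht₃.continuousOn.continuousAt hnhds)
  have c₄ : ContinuousAt t₄ 0 := (ht₄.continuousOn.continuousAt hnhds)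
  have E₁ : ∀ᶠ w in 𝓝 (0:ℂ), m / 2 < ‖t₁ w‖ :=
    c₁.norm.eventually (eventually_gt_nhds (by linarith))
  have E₂ : ∀ᶠ w in 𝓝 (0:ℂ), ‖t₂ w‖ < M :=
    c₂.norm.eventually (eventually_lt_nhds
      (lt_of_lt_of_le (lt_add_one _) ((le_max_left _ _).trans (le_max_left _ _))))
  have E₃ : ∀ᶠ w in 𝓝 (0:ℂ), ‖t₃ w‖ < M :=
    c₃.norm.eventually (eventually_lt_nhds
      (lt_of_lt_of_le (lt_add_one _) ((le_max_right _ _).trans (le_max_left _ _))))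
  have E₄ : ∀ᶠ w in 𝓝 (0:ℂ), ‖t₄ w‖ < M :=
    c₄.norm.eventually (eventually_lt_nhds
      (lt_of_lt_of_le (lt_add_one _) (le_max_right _ _)))
  set ε₀ : ℝ := min 1 (m / (4 * M)) with hε₀_def
  have hε₀ : 0 < ε₀ := lt_min one_pos (by positivity)
  have E₅ : ∀ᶠ w in 𝓝 (0:ℂ), ‖w‖ < ε₀ := by
    have : ∀ᶠ w in 𝓝 (0:ℂ), w ∈ ball (0:ℂ) ε₀ :=
      isOpen_ball.eventually_mem (mem_ball_self hε₀)
    filter_upwards [this] with w hw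
    simpa [dist_zero_right] using hw
  have Eall := (E₁.and (E₂.and (E₃.and (E₄.and E₅))))
  rw [Metric.eventually_nhds_iff_ball] at Eall
  obtain ⟨η, hη, hP⟩ := Eall
  refine ⟨η, hη, fun z hz0 hzη => ?_⟩
  obtain ⟨h1, h2, h3, h4, h5⟩ := hP z (by simpa [mem_ball, dist_zero_right] using hzη)
  have hz1 : ‖z‖ < 1 := lt_of_lt_of_le h5 (min_le_left _ _)
  have hzm : ‖z‖ < m / (4 * M) := lt_of_lt_of_le h5 (min_le_right _ _)
  have hzball : z ∈ ball (0:ℂ) 1 := by simpa [mem_ball, dist_zero_right] using hz1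
  have hfd := key_fderiv (hf₁ z hzball) (hf₂ z hzball) (hf₃ z hzball) (hf₄ z hzball) F hF
  set a : ℂ := z ^ n₁ * t₁ z
  set b : ℂ := z ^ n₂ * t₂ z
  set c : ℂ := z ^ n₃ * t₃ z
  set d : ℂ := z ^ n₄ * t₄ z
  have hv1 : fderiv ℝ F z 1 = (a + conj b, c + conj d) := by simpa using hfd 1
  have hvI : fderiv ℝ F z Complex.I =
      (a * Complex.I + conj (b * Complex.I), c * Complex.I + conj (d * Complex.I)) := hfd Complex.I
  rw [hv1, hvI, omegaPlus_eval, omegaMinus_eval]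
  -- norm-squared computations
  set r : ℝ := Complex.normSq z with hr_def
  have hrnorm : r = ‖z‖ ^ 2 := by
    rw [hr_def, ← Complex.sq_norm]
  have hr : 0 < r := by rw [hrnorm]; positivity
  have hr1 : r ≤ 1 := by
    rw [hrnorm]
    nlinarith [norm_nonneg z]
  have hrm : r < (m / (4 * M)) ^ 2 := by
    rw [hrnorm]
    exact pow_lt_pow_left₀ hzm (norm_nonneg z) two_ne_zero
  have hrp : (0:ℝ) < r ^ n₁ := pow_pos hr _
  have hNa : Complex.normSq a = r ^ n₁ * Complex.normSq (t₁ z) := by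
    simp [a, Complex.normSq_mul, map_pow Complex.normSq, hr_def]
  have hA : r ^ n₁ * (m / 2) ^ 2 < Complex.normSq a := by
    rw [hNa]
    apply mul_lt_mul_of_pos_left _ hrp
    have : Complex.normSq (t₁ z) = ‖t₁ z‖ ^ 2 := by
      rw [← Complex.sq_norm]
    rw [this]
    exact pow_lt_pow_left₀ h1 (by positivity) two_ne_zero
  have hbound : ∀ (n : ℕ) (t : ℂ), n₁ < n → ‖t‖ < M →
      Complex.normSq (z ^ n * t) ≤ r ^ n₁ * r * M ^ 2 := by
    intro n t hn ht
    have hNt : Complex.normSq (z ^ n * t) = r ^ n * Complex.normSq t := by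
      simp [Complex.normSq_mul, map_pow Complex.normSq, hr_def]
    rw [hNt]
    have h1' : r ^ n ≤ r ^ (n₁ + 1) := pow_le_pow_of_le_one hr.le hr1 hn
    have h2' : Complex.normSq t ≤ M ^ 2 := by
      have : Complex.normSq t = ‖t‖ ^ 2 := by rw [← Complex.sq_norm]
      rw [this]
      exact pow_le_pow_left₀ (norm_nonneg t) ht.le 2
    calc r ^ n * Complex.normSq t ≤ r ^ (n₁ + 1) * M ^ 2 :=
          mul_le_mul h1' h2' (Complex.normSq_nonneg t) (by positivity)
      _ = r ^ n₁ * r * M ^ 2 := by ring_nf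
  have hB := hbound n₂ (t₂ z) h12 h2
  have hC := hbound n₃ (t₃ z) h13 h3
  have hD := hbound n₄ (t₄ z) h14 h4
  have hstep : r * (3 * M ^ 2) < (m / 2) ^ 2 := by
    have h1' : r * (3 * M ^ 2) < (m / (4 * M)) ^ 2 * (3 * M ^ 2) :=
      mul_lt_mul_of_pos_right hrm (by positivity)
    have h2' : (m / (4 * M)) ^ 2 * (3 * M ^ 2) = 3 / 16 * m ^ 2 := by
      field_simp
      ring
    nlinarith [sq_nonneg m, hm]
  have hkey : Complex.normSq b + Complex.normSq c + Complex.normSq d < Complex.normSq a := by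
    have : Complex.normSq b + Complex.normSq c + Complex.normSq d ≤
        r ^ n₁ * (r * (3 * M ^ 2)) := by
      have : r ^ n₁ * r * M ^ 2 * 3 = r ^ n₁ * (r * (3 * M ^ 2)) := by ring
      linarith [hB, hC, hD]
    have h2' : r ^ n₁ * (r * (3 * M ^ 2)) < r ^ n₁ * (m / 2) ^ 2 :=
      mul_lt_mul_of_pos_left hstep hrp
    linarith
  have nb := Complex.normSq_nonneg b
  have nc := Complex.normSq_nonneg c
  have nd := Complex.normSq_nonneg d
  constructor <;> [skip; skip] <;> linarith
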